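/- Fix ν ∈ (0,1], ζ ≥ 0, and α > 0 with α ≠ ν. For λ > 0 define X(λ) = sqrt((α − ν + λν)² + 4λν²), q̂(λ) = (X(λ) + α − (1 + λ)ν)/(2λ), S(λ) = q̂(λ)/(ν + q̂(λ)), γ(λ) = νS(λ)²/α, I(λ) = 1 − 2νS(λ) + νS(λ)², and E(λ) = (I(λ) + γ(λ)ζ²)/(1 − γ(λ)). Then as λ → 0⁺, E(λ) converges to: (ν/(ν−α))·[(1−ν) + (α−ν)²/ν] + α·ζ²/(ν − α) if α < ν, and (α/(α−ν))·(1−ν) + ν·ζ²/(α − ν) if α > ν. -/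

import Mathlib

/-- Conjugate order parameter of the replica saddle-point equations (with `a = 1`,
corresponding to isotropic data with `s = 1`, `c = 0`, `ω = 0`):
`q̂(λ) = (X(λ) + α − (1 + λ)ν)/(2λ)` with `X(λ) = √((α − ν + λν)² + 4λν²)`. -/
noncomputable def qhatFun (α ν lam : ℝ) : ℝ :=
  (Real.sqrt ((α - ν + lam * ν) ^ 2 + 4 * lam * ν ^ 2) + α - (1 + lam) * ν) / (2 * lam)

/-- Reduced resolvent factor `S(λ) = q̂(λ)/(ν + q̂(λ))`. -/
noncomputable def Sfun (α ν lam : ℝ) : ℝ :=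
  qhatFun α ν lam / (ν + qhatFun α ν lam)

/-- Overlap parameter `γ(λ) = νS(λ)²/α`. -/
noncomputable def gammaFun (α ν lam : ℝ) : ℝ :=
  ν * Sfun α ν lam ^ 2 / α

lemma S_lim (ν α : ℝ) (hν0 : 0 < ν) (hα : 0 < α) (hαν : α ≠ ν) :
    Filter.Tendsto (fun lam => Sfun α ν lam) (nhdsWithin 0 (Set.Ioi 0))
      (nhds (if α < ν then α / ν else 1)) := by
  set X : ℝ → ℝ := fun lam => Real.sqrt ((α - ν + lam * ν) ^ 2 + 4 * lam * ν ^ 2) with hXdef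
  set N : ℝ → ℝ := fun lam => X lam + α - (1 + lam) * ν with hNdef
  have hXcont : Continuous X := by
    apply Real.continuous_sqrt.comp; continuity
  have hNcont : Continuous N := by
    apply Continuous.sub; apply Continuous.add hXcont continuous_const; continuity
  have hden : ∀ lam : ℝ, 0 < lam → 0 < 2 * lam * ν + N lam := by
    intro lam hl
    have hpos : 0 < 4 * lam * ν ^ 2 := by positivity
    have h1 : |α - ν + lam * ν| < X lam := by
      rw [hXdef]
      have : Real.sqrt ((α - ν + lam * ν) ^ 2) < Real.sqrt ((α - ν + lam * ν) ^ 2 + 4 * lam * ν ^ 2) := by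
        apply Real.sqrt_lt_sqrt (by positivity)
        linarith
      simpa [Real.sqrt_sq_eq_abs] using this
    have h2 : -(α - ν + lam * ν) ≤ |α - ν + lam * ν| := neg_le_abs _
    simp only [hNdef]
    nlinarith
  have hSeq : ∀ lam : ℝ, 0 < lam → Sfun α ν lam = N lam / (2 * lam * ν + N lam) := by
    intro lam hl
    have h2l : (2 * lam) ≠ 0 := by positivity
    have hq : qhatFun α ν lam = N lam / (2 * lam) := rfl
    have hd := hden lam hl
    have hd2 : ν + N lam / (2 * lam) = (2 * lam * ν + N lam) / (2 * lam) := by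
      field_simp
    rw [Sfun, hq, hd2, div_div_div_cancel_right₀]
    exact h2l
  rcases hαν.lt_or_gt with hlt | hgt
  · -- α < ν
    simp only [if_pos hlt]
    have hνα : 0 < ν - α := by linarith
    set M : ℝ → ℝ := fun lam => ν * (2 * α + 2 * ν + lam * ν) / (X lam + (ν - α)) - ν with hMdef
    have hX0 : X 0 = ν - α := by
      simp only [hXdef]
      rw [show (α - ν + 0 * ν) ^ 2 + 4 * 0 * ν ^ 2 = (ν - α)^2 by ring]
      rw [Real.sqrt_sq (by linarith)]
    have hXpos : ∀ lam : ℝ, 0 < X lam + (ν - α) := by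
      intro lam
      have : 0 ≤ X lam := Real.sqrt_nonneg _
      linarith
    have hNM : ∀ lam : ℝ, 0 < lam → N lam = lam * M lam := by
      intro lam hl
      have hd := hXpos lam
      have hsq : X lam ^ 2 = (α - ν + lam * ν) ^ 2 + 4 * lam * ν ^ 2 := by
        rw [hXdef]
        exact Real.sq_sqrt (by positivity)
      simp only [hNdef, hMdef]
      field_simp
      nlinarith [hsq]
    have hMtend : Filter.Tendsto M (nhdsWithin 0 (Set.Ioi 0)) (nhds (2 * α * ν / (ν - α))) := by
      have hMcont : ContinuousAt M 0 := by
        apply ContinuousAt.sub _ continuousAt_const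
        apply ContinuousAt.div
        · fun_prop
        · exact (hXcont.add continuous_const).continuousAt
        · rw [hX0]; exact ne_of_gt (by linarith)
      have hM0 : M 0 = 2 * α * ν / (ν - α) := by
        simp only [hMdef, hX0]
        rw [show ν - α + (ν - α) = 2 * (ν - α) by ring]
        field_simp
        ring
      rw [← hM0]
      exact hMcont.continuousWithinAt.tendsto
    have hSeq2 : ∀ lam ∈ Set.Ioi (0:ℝ), Sfun α ν lam = M lam / (2 * ν + M lam) := by
      intro lam hl
      rw [hSeq lam hl, hNM lam hl]
      rw [show 2 * lam * ν + lam * M lam = lam * (2 * ν + M lam) by ring]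
      rw [mul_div_mul_left _ _ (ne_of_gt hl)]
    have hkey : 2 * ν + 2 * α * ν / (ν - α) = 2 * ν ^ 2 / (ν - α) := by
      field_simp; ring
    have hd0 : 2 * ν + 2 * α * ν / (ν - α) ≠ 0 := by
      rw [hkey]; exact ne_of_gt (div_pos (by positivity) hνα)
    have hval : (2 * α * ν / (ν - α)) / (2 * ν + 2 * α * ν / (ν - α)) = α / ν := by
      rw [hkey]
      rw [div_div_div_cancel_right₀]
      · rw [div_eq_div_iff (by positivity) (by positivity)]
        ring
      · exact ne_of_gt hνα
    have htend : Filter.Tendsto (fun lam => M lam / (2 * ν + M lam)) (nhdsWithin 0 (Set.Ioi 0))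
        (nhds (α / ν)) := by
      rw [← hval]
      exact hMtend.div (tendsto_const_nhds.add hMtend) hd0
    exact htend.congr' (Filter.eventuallyEq_of_mem self_mem_nhdsWithin
      (fun lam hl => (hSeq2 lam hl).symm))
  · -- α > ν
    simp only [if_neg (not_lt.mpr hgt.le)]
    have hN0 : N 0 = 2 * (α - ν) := by
      simp only [hNdef, hXdef]
      rw [show (α - ν + 0 * ν) ^ 2 + 4 * 0 * ν ^ 2 = (α - ν)^2 by ring]
      rw [Real.sqrt_sq (by linarith)]
      ring
    have hNtend : Filter.Tendsto N (nhdsWithin 0 (Set.Ioi 0)) (nhds (2 * (α - ν))) := by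
      rw [← hN0]
      exact hNcont.continuousAt.continuousWithinAt.tendsto
    have hDtend : Filter.Tendsto (fun lam => 2 * lam * ν + N lam) (nhdsWithin 0 (Set.Ioi 0))
        (nhds (2 * (α - ν))) := by
      have h1 : Filter.Tendsto (fun lam : ℝ => 2 * lam * ν) (nhdsWithin 0 (Set.Ioi 0)) (nhds 0) := by
        have : ContinuousAt (fun lam : ℝ => 2 * lam * ν) 0 := by fun_prop
        simpa using this.continuousWithinAt.tendsto
      simpa using h1.add hNtend
    have htend := hNtend.div hDtend (by intro h; nlinarith)
    rw [div_self (by intro h; nlinarith : (2 : ℝ) * (α - ν) ≠ 0)] at htend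
    exact htend.congr' (Filter.eventuallyEq_of_mem self_mem_nhdsWithin
      (fun lam hl => (hSeq lam hl).symm))

/-- Ridgeless limit of the generalization error of a single feature-subsampling ridge
regressor on isotropic data, showing the double-descent peak shifted to `α = ν`. -/
theorem stmt_12 (ν ζ α : ℝ) (hν : ν ∈ Set.Ioc (0 : ℝ) 1) (hζ : 0 ≤ ζ)
    (hα : 0 < α) (hαν : α ≠ ν) :
    Filter.Tendsto
      (fun lam : ℝ =>
        ((1 - 2 * ν * Sfun α ν lam + ν * Sfun α ν lam ^ 2)
            + gammaFun α ν lam * ζ ^ 2) / (1 - gammaFun α ν lam))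
      (nhdsWithin 0 (Set.Ioi 0))
      (nhds (if α < ν then
          (ν / (ν - α)) * ((1 - ν) + (α - ν) ^ 2 / ν) + α * ζ ^ 2 / (ν - α)
        else
          (α / (α - ν)) * (1 - ν) + ν * ζ ^ 2 / (α - ν))) := by
  obtain ⟨hν0, hν1⟩ := hν
  set L : ℝ := if α < ν then α / ν else 1 with hL
  have hS := S_lim ν α hν0 hα hαν
  have hLsq : 1 - ν * L ^ 2 / α ≠ 0 := by
    rcases hαν.lt_or_gt with h | h
    · simp only [hL, if_pos h]
      rw [show ν * (α / ν) ^ 2 / α = α / ν by field_simp]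
      have : α / ν < 1 := (div_lt_one hν0).mpr h
      intro hc; rw [sub_eq_zero] at hc; linarith
    · simp only [hL, if_neg (not_lt.mpr h.le)]
      have : ν / α < 1 := (div_lt_one hα).mpr h
      intro hc; rw [sub_eq_zero] at hc
      simp only [one_pow, mul_one] at hc; linarith
  have hF : Filter.Tendsto
      (fun s : ℝ => ((1 - 2 * ν * s + ν * s ^ 2) + ν * s ^ 2 / α * ζ ^ 2) / (1 - ν * s ^ 2 / α))
      (nhds L)
      (nhds (((1 - 2 * ν * L + ν * L ^ 2) + ν * L ^ 2 / α * ζ ^ 2) / (1 - ν * L ^ 2 / α))) := by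
    apply ContinuousAt.tendsto
    exact ContinuousAt.div (by fun_prop) (by fun_prop) hLsq
  have hcomp := hF.comp hS
  have heq : (fun lam : ℝ =>
        ((1 - 2 * ν * Sfun α ν lam + ν * Sfun α ν lam ^ 2)
            + gammaFun α ν lam * ζ ^ 2) / (1 - gammaFun α ν lam)) =
      (fun s : ℝ => ((1 - 2 * ν * s + ν * s ^ 2) + ν * s ^ 2 / α * ζ ^ 2) / (1 - ν * s ^ 2 / α))
        ∘ (fun lam => Sfun α ν lam) := by
    funext lam; simp [gammaFun, Function.comp]
  rw [heq]
  convert hcomp using 2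
  rcases hαν.lt_or_gt with h | h
  · simp only [hL, if_pos h]
    have hνα : ν - α ≠ 0 := by intro hc; apply hαν; linarith
    rw [show (1:ℝ) - ν * (α / ν) ^ 2 / α = (ν - α) / ν by field_simp]
    rw [div_div_eq_mul_div, eq_div_iff hνα]
    field_simp
    ring
  · simp only [hL, if_neg (not_lt.mpr h.le)]
    have hνα : α - ν ≠ 0 := by intro hc; apply hαν; linarith
    rw [show (1:ℝ) - ν * 1 ^ 2 / α = (α - ν) / α by field_simp]
    rw [div_div_eq_mul_div, eq_div_iff hνα]
    field_simp
    ring
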